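/- Let q ∈ (0,1) and let n ≥ 2 be an integer. Set P(s_i) = (1-q)^{i+1} · q / (1 - (1-q)^n - q) for 0 ≤ i ≤ n-2 and P(s_{n-1}) = (1-q)^n / (1 - (1-q)^n - q). Then the average source-message length ∑_{i=0}^{n-2} P(s_i)·(i+1) + P(s_{n-1})·(n-1) equals 1/q. -/

import Mathlib

lemma mzrl_aux (q : ℝ) (m : ℕ) :
    (∑ i ∈ Finset.range (m + 1), (1 - q) ^ (i + 1) * q * ((i : ℝ) + 1)) * q
      + (1 - q) ^ (m + 2) * ((m : ℝ) + 1) * q = 1 - (1 - q) ^ (m + 2) - q := by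
  induction m with
  | zero => simp; ring
  | succ k ih =>
    rw [Finset.sum_range_succ, add_mul]
    push_cast
    push_cast at ih
    linear_combination ih

/-- The average source-message length of the MZRL code:
`∑_{i=0}^{n-2} P(s_i)(i+1) + P(s_{n-1})(n-1) = 1/q`, where
`P(s_i) = (1-q)^{i+1} q / (1-(1-q)^n - q)` and
`P(s_{n-1}) = (1-q)^n / (1-(1-q)^n - q)`. -/
theorem stmt_4 (q : ℝ) (hq : q ∈ Set.Ioo (0:ℝ) 1) (n : ℕ) (hn : 2 ≤ n) :
    (∑ i ∈ Finset.range (n - 1),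
        (1 - q) ^ (i + 1) * q / (1 - (1 - q) ^ n - q) * ((i : ℝ) + 1)) +
      (1 - q) ^ n / (1 - (1 - q) ^ n - q) * ((n : ℝ) - 1) = 1 / q := by
  obtain ⟨hq0, hq1⟩ := hq
  obtain ⟨m, rfl⟩ : ∃ m, n = m + 2 := ⟨n - 2, by omega⟩
  have hr0 : (0:ℝ) < 1 - q := by linarith
  have hr1 : (1:ℝ) - q < 1 := by linarith
  have hpow : (1 - q) ^ (m + 2) < (1 - q) ^ 1 :=
    pow_lt_pow_right_of_lt_one₀ hr0 hr1 (by omega)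
  have hD : (1 : ℝ) - (1 - q) ^ (m + 2) - q ≠ 0 := by
    simp only [pow_one] at hpow; nlinarith
  have key := mzrl_aux q m
  have hcast : ((m + 2 : ℕ) : ℝ) - 1 = (m : ℝ) + 1 := by push_cast; ring
  simp only [show m + 2 - 1 = m + 1 from rfl, hcast]
  have hterm : ∀ i ∈ Finset.range (m + 1),
      (1 - q) ^ (i + 1) * q / (1 - (1 - q) ^ (m + 2) - q) * ((i : ℝ) + 1)
        = (1 - q) ^ (i + 1) * q * ((i : ℝ) + 1) / (1 - (1 - q) ^ (m + 2) - q) :=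
    fun i _ => by ring
  rw [Finset.sum_congr rfl hterm, ← Finset.sum_div, div_mul_eq_mul_div,
    ← add_div, div_eq_div_iff hD hq0.ne']
  linarith [key]
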